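/- arXiv:2205.05001 — 6 statements merged into one kernel-verified Lean document; each statement's English description precedes it below -/
import Mathlib

section
/- Let G be a finite simple graph on vertex set V. For each vertex v, let s_v : V → Bool be the indicator of the closed neighborhood of v (s_v u = true iff u = v or u is adjacent to v), and let s₀ be the all-false assignment. Suppose D ⊆ V is a dominating set of G with |D| ≤ k. Then the decision list whose conditions are the positive literals (d, true) for d ∈ D (in any order), each with action 1, and with default action 0, satisfies all requirements: it outputs 1 on s_v for every v ∈ V, and outputs 0 on s₀. -/
structure DecisionList (V : Type) (A : Type) where
  entries : List ((V × Bool) × A)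
  dflt : A

def DecisionList.eval {V A : Type} (L : DecisionList V A) (s : V → Bool) : A :=
  match L.entries.find? (fun e => s e.1.1 == e.1.2) with
  | some e => e.2
  | none => L.dflt

theorem aux_eval {V : Type} (l : List V) (s : V → Bool) (h : ∃ d ∈ l, s d = true) :
    DecisionList.eval ⟨l.map (fun d => ((d, true), (1 : ℕ))), 0⟩ s = 1 := by
  induction l with
  | nil => simp at h
  | cons a t ih =>
    unfold DecisionList.eval
    by_cases ha : s a = true
    · simp [List.find?, ha]
    · simp only [List.mem_cons] at h
      obtain ⟨d, hd, hsd⟩ := h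
      rcases hd with rfl | hd
      · exact absurd hsd ha
      · have := ih ⟨d, hd, hsd⟩
        unfold DecisionList.eval at this
        simpa [List.find?, ha] using this

theorem stmt2 {V : Type} [Fintype V] [DecidableEq V] (G : SimpleGraph V)
    [DecidableRel G.Adj] (k : ℕ) (D : Finset V)
    (hdom : ∀ v : V, ∃ d ∈ D, d = v ∨ G.Adj v d) (hcard : D.card ≤ k)
    (ds : List V) (hds : ∀ d, d ∈ ds ↔ d ∈ D) (hnd : ds.Nodup) :
    (∀ v : V,
      DecisionList.eval ⟨ds.map (fun d => ((d, true), (1 : ℕ))), 0⟩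
        (fun u => decide (u = v ∨ G.Adj v u)) = 1) ∧
    DecisionList.eval ⟨ds.map (fun d => ((d, true), (1 : ℕ))), 0⟩
      (fun _ => false) = 0 := by
  constructor
  · intro v
    obtain ⟨d, hdD, hd⟩ := hdom v
    exact aux_eval ds _ ⟨d, (hds d).mpr hdD, by simp [hd]⟩
  · unfold DecisionList.eval
    have : (ds.map (fun d => ((d, true), (1 : ℕ)))).find?
        (fun e => false == e.1.2) = none := by
      apply List.find?_eq_none.mpr
      rintro ⟨⟨a, b⟩, c⟩ hm
      obtain ⟨d', _, h⟩ := List.mem_map.mp hm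
      cases h; simp
    rw [this]
end

section
/- Let G be a finite simple graph on vertex set V, and define requirements as follows: for each vertex v, the assignment s_v (indicator of the closed neighborhood of v) must yield output 1, and the all-false assignment s₀ must yield output 0. If a decision list all of whose condition literals are positive has at most k conditions and satisfies all these requirements, then G has a dominating set of size at most k. -/
theorem stmt3 {V : Type} [Fintype V] [DecidableEq V] (G : SimpleGraph V)
    [DecidableRel G.Adj] (k : ℕ) (L : DecisionList V ℕ)
    (hpos : ∀ e ∈ L.entries, e.1.2 = true)
    (hlen : L.entries.length ≤ k)
    (hreq1 : ∀ v : V, L.eval (fun u => decide (u = v ∨ G.Adj v u)) = 1)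
    (hreq0 : L.eval (fun _ => false) = 0) :
    ∃ D : Finset V, D.card ≤ k ∧ ∀ v : V, ∃ d ∈ D, d = v ∨ G.Adj v d := by
  refine ⟨(L.entries.map (fun e => e.1.1)).toFinset, ?_, ?_⟩
  · calc (L.entries.map (fun e => e.1.1)).toFinset.card
        ≤ (L.entries.map (fun e => e.1.1)).length := List.toFinset_card_le _
      _ = L.entries.length := List.length_map _
      _ ≤ k := hlen
  · intro v
    have h1 := hreq1 v
    unfold DecisionList.eval at h1
    cases hfind : L.entries.find? (fun e => decide (e.1.1 = v ∨ G.Adj v e.1.1) == e.1.2) with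
    | none =>
      rw [hfind] at h1
      -- dflt = 1, but hreq0 says eval of all-false = 0; all-false find? is none
      unfold DecisionList.eval at hreq0
      have hnone : L.entries.find? (fun e => (false : Bool) == e.1.2) = none := by
        rw [List.find?_eq_none]
        intro e he
        simp [hpos e he]
      rw [hnone] at hreq0
      omega
    | some e =>
      have hmem := List.mem_of_find?_eq_some hfind
      have hp := List.find?_some hfind
      refine ⟨e.1.1, ?_, ?_⟩
      · rw [List.mem_toFinset, List.mem_map]
        exact ⟨e, hmem, rfl⟩
      · simp [hpos e hmem] at hp
        exact hp
end

section
/- Let G be a finite simple graph on vertex set V with the requirements: output 1 on s_v (the closed-neighborhood indicator of v) for each vertex v, and output 0 on the all-false assignment s₀. Then G has a dominating set of size at most k if and only if there exists a decision list over V (whose literals may be positive or negated) with at most k conditions and actions in {0, 1} that satisfies all these requirements. -/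
lemma find?_congr' {α : Type*} (p q : α → Bool) :
    ∀ l : List α, (∀ a ∈ l, p a = q a) → l.find? p = l.find? q := by
  intro l
  induction l with
  | nil => simp
  | cons a t ih =>
    intro h
    simp only [List.find?]
    rw [h a (by simp)]
    cases q a with
    | true => rfl
    | false => exact ih fun b hb => h b (by simp [hb])

lemma eval_congr {V : Type} (L : DecisionList V ℕ) (s t : V → Bool)
    (h : ∀ e ∈ L.entries, s e.1.1 = t e.1.1) : L.eval s = L.eval t := by
  unfold DecisionList.eval
  rw [find?_congr' _ _ L.entries (fun e he => by rw [h e he])]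

theorem stmt4 {V : Type} [Fintype V] [DecidableEq V] (G : SimpleGraph V)
    [DecidableRel G.Adj] (k : ℕ) :
    (∃ D : Finset V, D.card ≤ k ∧ ∀ v : V, ∃ d ∈ D, d = v ∨ G.Adj v d) ↔
    (∃ L : DecisionList V ℕ,
      L.entries.length ≤ k ∧
      (∀ e ∈ L.entries, e.2 = 0 ∨ e.2 = 1) ∧ (L.dflt = 0 ∨ L.dflt = 1) ∧
      (∀ v : V, L.eval (fun u => decide (u = v ∨ G.Adj v u)) = 1) ∧
      L.eval (fun _ => false) = 0) := by
  constructor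
  · rintro ⟨D, hcard, hdom⟩
    refine ⟨⟨D.toList.map (fun d => ((d, true), 1)), 0⟩, ?_, ?_, Or.inl rfl, ?_, ?_⟩
    · simpa using hcard
    · intro e he
      simp only [List.mem_map] at he
      obtain ⟨d, _, rfl⟩ := he
      exact Or.inr rfl
    · intro v
      obtain ⟨d, hd, hdv⟩ := hdom v
      unfold DecisionList.eval
      have hsome : (List.find? (fun e => decide (e.1.1 = v ∨ G.Adj v e.1.1) == e.1.2)
          (D.toList.map (fun d => ((d, true), 1)))).isSome := by
        rw [List.find?_isSome]
        refine ⟨((d, true), 1), List.mem_map.mpr ⟨d, by simpa using hd, rfl⟩, ?_⟩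
        simp [hdv]
      obtain ⟨e, he⟩ := Option.isSome_iff_exists.mp hsome
      rw [he]
      have := List.mem_of_find?_eq_some he
      simp only [List.mem_map] at this
      obtain ⟨d', _, rfl⟩ := this
      rfl
    · unfold DecisionList.eval
      have : List.find? (fun e => (false : Bool) == e.1.2)
          (D.toList.map (fun d => ((d, true), 1))) = none := by
        rw [List.find?_eq_none]
        intro e he
        simp only [List.mem_map] at he
        obtain ⟨d, _, rfl⟩ := he
        simp
      rw [this]
  · rintro ⟨L, hlen, _, _, hv, h0⟩
    refine ⟨(L.entries.map (fun e => e.1.1)).toFinset, ?_, ?_⟩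
    · calc (L.entries.map (fun e => e.1.1)).toFinset.card
          ≤ (L.entries.map (fun e => e.1.1)).length := List.toFinset_card_le _
        _ ≤ k := by simpa using hlen
    · intro v
      by_contra hcon
      push_neg at hcon
      have heq : L.eval (fun u => decide (u = v ∨ G.Adj v u)) = L.eval (fun _ => false) := by
        apply eval_congr
        intro e he
        have : e.1.1 ∈ (L.entries.map (fun e => e.1.1)).toFinset := by
          simp only [List.mem_toFinset, List.mem_map]
          exact ⟨e, he, rfl⟩
        have h2 := hcon e.1.1 this
        simp only [decide_eq_false_iff_not]
        intro hor
        rcases hor with h | h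
        · exact h2.1 h
        · exact h2.2 h
      rw [hv v, h0] at heq
      exact one_ne_zero heq
end

section
/- Let G be a finite simple graph on vertex set V, let z be a fresh variable not in V, and consider decision lists over V ⊕ {z} with actions in {0, 1, 2}. Define requirements: for each v ∈ V, the assignment that is true exactly on the closed neighborhood of v together with z must yield output 1; the all-false assignment must yield output 0; and the assignment that is true only on z must yield output 2. Then G has a dominating set of size at most k if and only if there exists a decision list with at most k + 1 conditions satisfying all of these requirements. -/
lemma eval_cons {V A : Type} (e : (V × Bool) × A) (l : List ((V × Bool) × A)) (d : A)
    (s : V → Bool) :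
    DecisionList.eval ⟨e :: l, d⟩ s =
      if s e.1.1 = e.1.2 then e.2 else DecisionList.eval ⟨l, d⟩ s := by
  simp only [DecisionList.eval, List.find?_cons]
  by_cases h : s e.1.1 = e.1.2
  · simp [h]
  · simp [h, beq_false_of_ne h]

lemma eval_diff {V A : Type} :
    ∀ (l : List ((V × Bool) × A)) (d : A) (s t : V → Bool),
    DecisionList.eval ⟨l, d⟩ s ≠ DecisionList.eval ⟨l, d⟩ t →
    ∃ e ∈ l, s e.1.1 ≠ t e.1.1 := by
  intro l
  induction l with
  | nil => intro d s t h; exact absurd rfl h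
  | cons e l ih =>
    intro d s t h
    rw [eval_cons, eval_cons] at h
    by_cases hs : s e.1.1 = e.1.2 <;> by_cases ht : t e.1.1 = e.1.2
    · simp [hs, ht] at h
    · exact ⟨e, List.mem_cons_self, fun hc => ht (hc ▸ hs)⟩
    · exact ⟨e, List.mem_cons_self, fun hc => hs (hc ▸ ht)⟩
    · simp only [if_neg hs, if_neg ht] at h
      obtain ⟨e', he', hne⟩ := ih d s t h
      exact ⟨e', List.mem_cons_of_mem _ he', hne⟩

lemma filterMap_lt {α β : Type*} (g : α → Option β) :
    ∀ (l : List α), (∃ e ∈ l, g e = none) → (l.filterMap g).length < l.length := by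
  intro l
  induction l with
  | nil => rintro ⟨e, he, -⟩; exact absurd he List.not_mem_nil
  | cons a l ih =>
    rintro ⟨e, he, hge⟩
    rcases List.mem_cons.mp he with rfl | he
    · rw [List.filterMap_cons, hge]
      simp only [List.length_cons]
      exact Nat.lt_succ_of_le (List.length_filterMap_le g l)
    · rw [List.filterMap_cons]
      cases g a with
      | none => exact Nat.lt_succ_of_lt (ih ⟨e, he, hge⟩)
      | some b => simpa using ih ⟨e, he, hge⟩

theorem stmt12 {V : Type} [Fintype V] [DecidableEq V] (G : SimpleGraph V)
    [DecidableRel G.Adj] (k : ℕ) :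
    (∃ D : Finset V, D.card ≤ k ∧ ∀ v : V, ∃ d ∈ D, d = v ∨ G.Adj v d) ↔
    (∃ L : DecisionList (V ⊕ Unit) ℕ,
      L.entries.length ≤ k + 1 ∧
      (∀ e ∈ L.entries, e.2 ≤ 2) ∧ L.dflt ≤ 2 ∧
      (∀ v : V, L.eval (fun w => match w with
        | Sum.inl u => decide (u = v ∨ G.Adj v u)
        | Sum.inr _ => true) = 1) ∧
      L.eval (fun _ => false) = 0 ∧
      L.eval (fun w => match w with
        | Sum.inl _ => false
        | Sum.inr _ => true) = 2) := by
  constructor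
  · rintro ⟨D, hcard, hdom⟩
    refine ⟨⟨D.toList.map (fun d => ((Sum.inl d, true), 1)) ++ [((Sum.inr (), true), 2)], 0⟩,
      ?_, ?_, ?_, ?_, ?_, ?_⟩
    · simp [Finset.length_toList]; omega
    · intro e he
      simp only [List.mem_append, List.mem_map, List.mem_singleton] at he
      rcases he with ⟨d, -, rfl⟩ | rfl <;> norm_num
    · norm_num
    · intro v
      obtain ⟨d, hd, hdv⟩ := hdom v
      have hfind : (D.toList.map (fun d => (((Sum.inl d : V ⊕ Unit), true), (1:ℕ)))).find?
          (fun e => (fun w => match w with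
            | Sum.inl u => decide (u = v ∨ G.Adj v u)
            | Sum.inr _ => true) e.1.1 == e.1.2) ≠ none := by
        intro hnone
        rw [List.find?_eq_none] at hnone
        exact hnone (((Sum.inl d, true), 1)) (List.mem_map.mpr ⟨d, Finset.mem_toList.mpr hd, rfl⟩)
          (by simp [hdv])
      simp only [DecisionList.eval, List.find?_append]
      cases hf : (D.toList.map (fun d => (((Sum.inl d : V ⊕ Unit), true), (1:ℕ)))).find?
          (fun e => (fun w => match w with
            | Sum.inl u => decide (u = v ∨ G.Adj v u)
            | Sum.inr _ => true) e.1.1 == e.1.2) with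
      | none => exact absurd hf hfind
      | some e =>
        have he := List.mem_of_find?_eq_some hf
        obtain ⟨d', -, rfl⟩ := List.mem_map.mp he
        simp [hf, Option.or]
    · simp only [DecisionList.eval]
      rw [List.find?_eq_none.mpr]
      intro e he
      simp only [List.mem_append, List.mem_map, List.mem_singleton] at he
      rcases he with ⟨d, -, rfl⟩ | rfl <;> simp
    · simp only [DecisionList.eval, List.find?_append]
      rw [List.find?_eq_none.mpr (fun e he => ?_)]
      · simp [List.find?]
      · obtain ⟨d, -, rfl⟩ := List.mem_map.mp he
        simp
  · rintro ⟨L, hlen, -, -, h1, h0, h2⟩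
    have hLeval : ∀ s, L.eval s = DecisionList.eval ⟨L.entries, L.dflt⟩ s := fun s => rfl
    -- every vertex has an inl-literal entry in its closed neighborhood
    have hdomE : ∀ v : V, ∃ e ∈ L.entries, ∃ u, e.1.1 = Sum.inl u ∧ (u = v ∨ G.Adj v u) := by
      intro v
      have hne : DecisionList.eval ⟨L.entries, L.dflt⟩ (fun w => match w with
          | Sum.inl u => decide (u = v ∨ G.Adj v u)
          | Sum.inr _ => true) ≠ DecisionList.eval ⟨L.entries, L.dflt⟩ (fun w => match w with
          | Sum.inl _ => false
          | Sum.inr _ => true) := by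
        rw [← hLeval, ← hLeval, h1 v, h2]; omega
      obtain ⟨e, he, hne'⟩ := eval_diff _ _ _ _ hne
      cases hw : e.1.1 with
      | inl u =>
        refine ⟨e, he, u, hw, ?_⟩
        rw [hw] at hne'
        simp only at hne'
        by_contra hc
        simp [hc] at hne'
      | inr u => rw [hw] at hne'; simp at hne'
    -- some entry has an inr literal
    have hinr : ∃ e ∈ L.entries, ∃ u, e.1.1 = Sum.inr u := by
      have hne : DecisionList.eval ⟨L.entries, L.dflt⟩ (fun _ => false) ≠
          DecisionList.eval ⟨L.entries, L.dflt⟩ (fun w => match w with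
          | Sum.inl _ => false
          | Sum.inr _ => true) := by
        rw [← hLeval, ← hLeval, h0, h2]; omega
      obtain ⟨e, he, hne'⟩ := eval_diff _ _ _ _ hne
      cases hw : e.1.1 with
      | inl u => rw [hw] at hne'; simp at hne'
      | inr u => exact ⟨e, he, u, hw⟩
    set g : ((V ⊕ Unit) × Bool) × ℕ → Option V := fun e => e.1.1.getLeft? with hg
    set D : Finset V := (L.entries.filterMap g).toFinset with hD
    refine ⟨D, ?_, ?_⟩
    · have h1' : (L.entries.filterMap g).length < L.entries.length := by
        obtain ⟨e, he, u, hu⟩ := hinr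
        exact filterMap_lt g L.entries ⟨e, he, by simp [hg, hu]⟩
      calc D.card ≤ (L.entries.filterMap g).length := List.toFinset_card_le _
        _ ≤ k := by omega
    · intro v
      obtain ⟨e, he, u, hu, huv⟩ := hdomE v
      refine ⟨u, ?_, huv⟩
      rw [hD, List.mem_toFinset, List.mem_filterMap]
      exact ⟨e, he, by simp [hg, hu]⟩
end

section
/- Let G be a finite simple graph on vertex set V with requirements as in the Dominating Set reduction (output 1 on each closed-neighborhood indicator s_v, output 0 on the all-false assignment s₀), and suppose a decision list L with at most k conditions satisfies all requirements. If c is the first negated condition literal of L, C is the set of variables of the positive condition literals occurring before c, and every requirement s_v with v not dominated by a vertex of C is still unrecognized at c, then the set C together with the variable of c contains a dominating set of G of size at most k. -/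
theorem stmt13 {V : Type} [Fintype V] [DecidableEq V] (G : SimpleGraph V)
    [DecidableRel G.Adj] (k : ℕ) (L : DecisionList V ℕ)
    (hk : L.entries.length ≤ k)
    (hreq1 : ∀ v : V, L.eval (fun u => decide (u = v ∨ G.Adj v u)) = 1)
    (hreq0 : L.eval (fun _ => false) = 0)
    (ic : ℕ) (c : (V × Bool) × ℕ)
    (hc : L.entries[ic]? = some c) (hcneg : c.1.2 = false)
    (hpos : ∀ i < ic, ∀ e, L.entries[i]? = some e → e.1.2 = true)
    (hunrec : ∀ v : V,
      (¬ ∃ u ∈ (L.entries.take ic).map (fun e => e.1.1), u = v ∨ G.Adj v u) →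
      ∀ i < ic, ∀ e, L.entries[i]? = some e →
        ¬ ((fun u => decide (u = v ∨ G.Adj v u)) e.1.1 = e.1.2)) :
    ∃ D : Finset V,
      D ⊆ insert c.1.1 ((L.entries.take ic).map (fun e => e.1.1)).toFinset ∧
      D.card ≤ k ∧ ∀ v : V, ∃ d ∈ D, d = v ∨ G.Adj v d := by
  have hlt : ic < L.entries.length := by
    by_contra h
    rw [List.getElem?_eq_none_iff.2 (le_of_not_gt h)] at hc
    cases hc
  have hget : L.entries[ic] = c := by
    rw [List.getElem?_eq_getElem hlt] at hc
    exact Option.some.inj hc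
  have hdecomp : L.entries = L.entries.take ic ++ c :: L.entries.drop (ic + 1) := by
    conv_lhs => rw [← List.take_append_drop ic L.entries]
    rw [List.drop_eq_getElem_cons hlt, hget]
  -- membership in take ic gives an index < ic
  have hmemidx : ∀ x ∈ L.entries.take ic, ∃ i < ic, L.entries[i]? = some x := by
    intro x hx
    obtain ⟨i, hi⟩ := List.mem_iff_getElem?.1 hx
    have hilt : i < ic := by
      have := List.getElem?_eq_some_iff.1 hi
      exact lt_of_lt_of_le this.1 (List.length_take_le ic L.entries)
    exact ⟨i, hilt, by rw [← List.getElem?_take_of_lt hilt]; exact hi⟩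
  -- key: if all entries before ic fail under s and s satisfies c's literal, eval = c.2
  have key : ∀ s : V → Bool,
      (∀ i < ic, ∀ e, L.entries[i]? = some e → ¬ (s e.1.1 = e.1.2)) →
      s c.1.1 = c.1.2 → L.eval s = c.2 := by
    intro s hfail hsc
    unfold DecisionList.eval
    have hnone : (L.entries.take ic).find? (fun e => s e.1.1 == e.1.2) = none := by
      rw [List.find?_eq_none]
      intro x hx
      obtain ⟨i, hilt, hi⟩ := hmemidx x hx
      simpa using hfail i hilt x hi
    rw [hdecomp, List.find?_append, hnone]
    simp [hsc]
  -- c.2 = 0 from the all-false requirement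
  have hc2 : c.2 = 0 := by
    rw [← hreq0]
    refine (key (fun _ => false) ?_ (by rw [hcneg])).symm
    intro i hi e he h
    simp [hpos i hi e he] at h
  -- domination
  refine ⟨insert c.1.1 ((L.entries.take ic).map (fun e => e.1.1)).toFinset,
    subset_rfl, ?_, ?_⟩
  · calc (insert c.1.1 ((L.entries.take ic).map (fun e => e.1.1)).toFinset).card
        ≤ ((L.entries.take ic).map (fun e => e.1.1)).toFinset.card + 1 :=
          Finset.card_insert_le _ _
      _ ≤ ((L.entries.take ic).map (fun e => e.1.1)).length + 1 := by
          exact Nat.add_le_add_right (List.toFinset_card_le _) 1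
      _ ≤ ic + 1 := by
          have : ((L.entries.take ic).map (fun e => e.1.1)).length ≤ ic := by
            simp [List.length_take]
          omega
      _ ≤ L.entries.length := hlt
      _ ≤ k := hk
  · intro v
    by_cases hdom : ∃ u ∈ (L.entries.take ic).map (fun e => e.1.1), u = v ∨ G.Adj v u
    · obtain ⟨u, hu, huv⟩ := hdom
      exact ⟨u, Finset.mem_insert_of_mem (List.mem_toFinset.2 hu), huv⟩
    · refine ⟨c.1.1, Finset.mem_insert_self _ _, ?_⟩
      by_contra hnd
      have hsv : (fun u => decide (u = v ∨ G.Adj v u)) c.1.1 = false := by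
        simp only [decide_eq_false_iff_not]
        exact hnd
      have := key (fun u => decide (u = v ∨ G.Adj v u)) (hunrec v hdom) (hsv.trans hcneg.symm)
      rw [hreq1 v, hc2] at this
      exact one_ne_zero this
end

section
/- Let V be a finite type, S a finite set of assignments V → Bool, and r : S → A a required action for each assignment, where A is a finite action type. If there exists any decision list over V with at most k conditions satisfying r on all of S, then there exists one in which no two condition literals are equal and no condition at a position after a complementary pair of literals appears; in particular there exists a satisfying decision list with at most min(k, 2·|V|) conditions. -/
section Aux

lemma mem_dropLast_cons' {α : Type*} {x a : α} {l : List α}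
    (h : x ∈ (a :: l).dropLast) : x = a ∨ x ∈ l.dropLast := by
  cases l with
  | nil => simp at h
  | cons b t => rw [List.dropLast_cons₂] at h; exact List.mem_cons.1 h

lemma pairwise_dropLast_cons' {α : Type*} {R : α → α → Prop} {a : α} {l : List α}
    (h1 : ∀ x ∈ l.dropLast, R a x) (h2 : l.dropLast.Pairwise R) :
    (a :: l).dropLast.Pairwise R := by
  cases l with
  | nil => simp
  | cons b t => rw [List.dropLast_cons₂]; exact List.pairwise_cons.2 ⟨h1, h2⟩

variable {V A : Type} [DecidableEq V]

def dlFilt : List ((V × Bool) × A) → List (V × Bool) → List ((V × Bool) × A)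
  | [], _ => []
  | e :: es, seen =>
    if e.1 ∈ seen then dlFilt es seen
    else if (e.1.1, !e.1.2) ∈ seen then [e]
    else e :: dlFilt es (e.1 :: seen)

lemma dlFilt_length (es : List ((V × Bool) × A)) (seen : List (V × Bool)) :
    (dlFilt es seen).length ≤ es.length := by
  induction es generalizing seen with
  | nil => simp [dlFilt]
  | cons e es ih =>
    simp only [dlFilt]
    split_ifs with h1 h2
    · exact (ih seen).trans (Nat.le_succ _)
    · simp [Nat.succ_le_succ]
    · simpa using Nat.succ_le_succ (ih (e.1 :: seen))

lemma dlFilt_find (es : List ((V × Bool) × A)) (seen : List (V × Bool)) (s : V → Bool)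
    (hseen : ∀ l ∈ seen, s l.1 ≠ l.2) :
    (dlFilt es seen).find? (fun e => s e.1.1 == e.1.2)
      = es.find? (fun e => s e.1.1 == e.1.2) := by
  induction es generalizing seen with
  | nil => rfl
  | cons e es ih =>
    simp only [dlFilt]
    split_ifs with h1 h2
    · have hne : s e.1.1 ≠ e.1.2 := hseen _ h1
      rw [List.find?_cons_of_neg (by simpa using hne)]
      exact ih seen hseen
    · have hne : s e.1.1 ≠ !e.1.2 := hseen _ h2
      have heq : s e.1.1 = e.1.2 := by
        cases hb : e.1.2 <;> cases hb' : s e.1.1 <;> simp_all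
      rw [List.find?_cons_of_pos (by simpa using heq),
          List.find?_cons_of_pos (by simpa using heq)]
    · by_cases hs : s e.1.1 = e.1.2
      · rw [List.find?_cons_of_pos (by simpa using hs),
            List.find?_cons_of_pos (by simpa using hs)]
      · rw [List.find?_cons_of_neg (by simpa using hs),
            List.find?_cons_of_neg (by simpa using hs)]
        exact ih (e.1 :: seen) (by
          intro l hl
          rcases List.mem_cons.1 hl with rfl | hl
          · exact hs
          · exact hseen _ hl)

lemma dlFilt_good (es : List ((V × Bool) × A)) (seen : List (V × Bool)) :
    (∀ e ∈ dlFilt es seen, e.1 ∉ seen) ∧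
    (∀ e ∈ (dlFilt es seen).dropLast, (e.1.1, !e.1.2) ∉ seen) ∧
    ((dlFilt es seen).map (fun e => e.1)).Nodup ∧
    (dlFilt es seen).dropLast.Pairwise (fun e1 e2 => e1.1.1 ≠ e2.1.1) := by
  induction es generalizing seen with
  | nil => simp [dlFilt]
  | cons e es ih =>
    simp only [dlFilt]
    split_ifs with h1 h2
    · exact ih seen
    · refine ⟨?_, ?_, ?_, ?_⟩ <;> simp [h1]
    · obtain ⟨ia, ib, ic, id⟩ := ih (e.1 :: seen)
      have hne : ∀ x ∈ dlFilt es (e.1 :: seen), x.1 ≠ e.1 := fun x hx => by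
        have := ia x hx; simp at this; tauto
      have hnv : ∀ x ∈ (dlFilt es (e.1 :: seen)).dropLast, e.1.1 ≠ x.1.1 := by
        intro x hx h
        have h1' := hne x (List.dropLast_subset _ hx)
        have h2' := ib x hx
        simp only [List.mem_cons] at h2'
        have h2'' : (x.1.1, !x.1.2) ≠ e.1 := fun hc => h2' (Or.inl hc)
        cases hb : x.1.2 <;> cases hb' : e.1.2
        · exact h1' (Prod.ext h.symm (hb.trans hb'.symm))
        · exact h2'' (Prod.ext h.symm (by simp [hb, hb']))
        · exact h2'' (Prod.ext h.symm (by simp [hb, hb']))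
        · exact h1' (Prod.ext h.symm (hb.trans hb'.symm))
      refine ⟨?_, ?_, ?_, ?_⟩
      · intro x hx
        rcases List.mem_cons.1 hx with rfl | hx
        · exact h1
        · intro hc
          exact ia x hx (List.mem_cons_of_mem _ hc)
      · intro x hx
        rcases mem_dropLast_cons' hx with rfl | hx
        · exact h2
        · intro hc
          exact ib x hx (List.mem_cons_of_mem _ hc)
      · simp only [List.map_cons, List.nodup_cons]
        refine ⟨?_, ic⟩
        intro hc
        simp only [List.mem_map] at hc
        obtain ⟨x, hx, hx2⟩ := hc
        exact hne x hx hx2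
      · exact pairwise_dropLast_cons' hnv id

end Aux

theorem stmt15 {V A : Type} [Fintype V] (S : Set (V → Bool))
    (r : (V → Bool) → A) (k : ℕ)
    (h : ∃ L : DecisionList V A, L.entries.length ≤ k ∧ ∀ s ∈ S, L.eval s = r s) :
    ∃ L : DecisionList V A,
      (L.entries.map (fun e => e.1)).Nodup ∧
      (∀ i j, i < j → j + 1 < L.entries.length → ∀ e1 e2,
        L.entries[i]? = some e1 → L.entries[j]? = some e2 →
        ¬ (e1.1.1 = e2.1.1 ∧ e1.1.2 = !e2.1.2)) ∧
      L.entries.length ≤ min k (2 * Fintype.card V) ∧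
      ∀ s ∈ S, L.eval s = r s := by
  classical
  obtain ⟨L, hk, hS⟩ := h
  set res : List ((V × Bool) × A) := dlFilt L.entries [] with hres
  obtain ⟨ha, hb, hc, hd⟩ := dlFilt_good (V := V) (A := A) L.entries []
  rw [← hres] at hc hd
  refine ⟨⟨res, L.dflt⟩, hc, ?_, ?_, ?_⟩
  · intro i j hij hjlen e1 e2 h1 h2 ⟨hv, hbit⟩
    have hjlen' : j + 1 < res.length := hjlen
    have hjd : j < res.dropLast.length := by
      rw [List.length_dropLast]; omega
    have hid : i < res.dropLast.length := by omega
    have hj : j < res.length := by omega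
    have hi : i < res.length := lt_trans hij hj
    rw [show (⟨res, L.dflt⟩ : DecisionList V A).entries = res from rfl] at h1 h2
    rw [List.getElem?_eq_getElem hi, Option.some_inj] at h1
    rw [List.getElem?_eq_getElem hj, Option.some_inj] at h2
    have hR := List.pairwise_iff_getElem.1 hd i j hid hjd hij
    have h1d : res.dropLast[i]'hid = e1 := by rw [List.getElem_dropLast]; exact h1
    have h2d : res.dropLast[j]'hjd = e2 := by rw [List.getElem_dropLast]; exact h2
    rw [h1d, h2d] at hR
    exact hR hv
  · refine le_min ((dlFilt_length _ _).trans hk) ?_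
    have hcard := hc.length_le_card
    simp only [List.length_map] at hcard
    calc res.length ≤ Fintype.card (V × Bool) := hcard
      _ = 2 * Fintype.card V := by
        rw [Fintype.card_prod, Fintype.card_bool]; ring
  · intro s hs
    rw [← hS s hs]
    show DecisionList.eval _ s = _
    unfold DecisionList.eval
    rw [show (⟨res, L.dflt⟩ : DecisionList V A).entries = res from rfl,
        hres, dlFilt_find _ _ _ (by simp)]
end
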